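/- For i.i.d. geometric(p) random variables T_1,...,T_M with q = 1-p, define K = the largest k ∈ {0,...,M} such that max_{j≤k} T_j < max_{j} T_j and max_j T_j ≥ k (with appropriate conventions). Then P(K ≥ k) = Σ_{i=k}^{∞} (1-q^{i-1})^{k-1} [ (1-q^i)^{M-k+1} - (1-q^{i-1})^{M-k+1} ] for 1 ≤ k ≤ M. -/

import Mathlib

open MeasureTheory ProbabilityTheory

lemma geom_cdf_aux {Ω : Type*} [MeasurableSpace Ω] (μ : Measure Ω) [IsProbabilityMeasure μ]
    (p : ℝ) (hp : 0 < p) (hp1 : p ≤ 1) (f : Ω → ℕ) (hmeas : Measurable f)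
    (hgeom : ∀ n : ℕ, 1 ≤ n → μ {ω | f ω = n} = ENNReal.ofReal (p * (1 - p) ^ (n - 1)))
    (n : ℕ) : μ {ω | f ω ≤ n} = ENNReal.ofReal (1 - (1-p) ^ n) := by
  set q := 1 - p with hq
  have hq0 : 0 ≤ q := by simp [hq]; linarith
  have htail : μ {ω | n < f ω} = ENNReal.ofReal (q ^ n) := by
    have hU : {ω | n < f ω} = ⋃ m : ℕ, {ω | f ω = n + 1 + m} := by
      ext ω; simp only [Set.mem_setOf_eq, Set.mem_iUnion]
      constructor
      · intro h; exact ⟨f ω - (n+1), by omega⟩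
      · rintro ⟨m, hm⟩; omega
    rw [hU, measure_iUnion]
    · have : ∀ m : ℕ, μ {ω | f ω = n + 1 + m} = ENNReal.ofReal (p * q ^ n) * ENNReal.ofReal q ^ m := by
        intro m
        rw [hgeom _ (by omega)]
        rw [show n + 1 + m - 1 = n + m by omega, pow_add,
          ENNReal.ofReal_mul (by positivity), ENNReal.ofReal_mul (by positivity),
          ENNReal.ofReal_pow hq0, ENNReal.ofReal_pow hq0,
          ENNReal.ofReal_mul hp.le, ENNReal.ofReal_pow hq0]
        ring
      simp_rw [this]
      rw [ENNReal.tsum_mul_left, ENNReal.tsum_geometric]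
      have h1 : (1 : ENNReal) - ENNReal.ofReal q = ENNReal.ofReal p := by
        rw [← ENNReal.ofReal_one, ← ENNReal.ofReal_sub _ hq0]
        norm_num [hq]
      rw [h1, ENNReal.ofReal_mul hp.le, mul_comm (ENNReal.ofReal p), mul_assoc,
        ENNReal.mul_inv_cancel (by simp [hp]) ENNReal.ofReal_ne_top, mul_one]
    · intro a b hab
      simp only [Set.disjoint_left, Set.mem_setOf_eq]
      intro ω h1 h2; omega
    · intro m; exact hmeas (measurableSet_singleton _)
  have hc : {ω | f ω ≤ n} = {ω | n < f ω}ᶜ := by ext ω; simp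
  have hms : MeasurableSet {ω | n < f ω} := by
    have : {ω | n < f ω} = f ⁻¹' (Set.Ioi n) := rfl
    rw [this]; exact hmeas measurableSet_Ioi
  rw [hc, prob_compl_eq_one_sub hms, htail,
    ← ENNReal.ofReal_one, ← ENNReal.ofReal_sub _ (by positivity)]

/-- For i.i.d. geometric(p) generation times `T_1, ..., T_M` (support {1,2,...}),
with `W = max_j T_j` and `W_{k-1} = max_{j ≤ k-1} T_j`, the probability that the
opportunistic advance `K` is at least `k` (i.e. `W_{k-1} < W` and `W ≥ k`) is
`∑_{i=k}^∞ (1-q^{i-1})^{k-1} [(1-q^i)^{M-k+1} - (1-q^{i-1})^{M-k+1}]` where `q = 1-p`. -/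
theorem prob_opportunistic_advance
    {Ω : Type*} [MeasurableSpace Ω] (μ : Measure Ω) [IsProbabilityMeasure μ]
    (M : ℕ) (hM : 1 ≤ M) (p : ℝ) (hp : 0 < p) (hp1 : p ≤ 1)
    (T : Fin M → Ω → ℕ) (hmeas : ∀ i, Measurable (T i))
    (hindep : iIndepFun T μ)
    (hgeom : ∀ i, ∀ n : ℕ, 1 ≤ n →
      μ {ω | T i ω = n} = ENNReal.ofReal (p * (1 - p) ^ (n - 1)))
    (k : ℕ) (hk : 1 ≤ k) (hkM : k ≤ M) (q : ℝ) (hq : q = 1 - p) :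
    (μ {ω | ((Finset.univ.filter fun j : Fin M => (j : ℕ) < k - 1).sup fun j => T j ω)
              < (Finset.univ.sup fun j => T j ω)
            ∧ k ≤ Finset.univ.sup fun j => T j ω}).toReal
      = ∑' i : ℕ, if k ≤ i then
          (1 - q ^ (i - 1)) ^ (k - 1) *
            ((1 - q ^ i) ^ (M - k + 1) - (1 - q ^ (i - 1)) ^ (M - k + 1))
        else 0 := by
  have hq0 : 0 ≤ q := by rw [hq]; linarith
  have hq1 : q ≤ 1 := by rw [hq]; linarith
  set F : ℕ → ℝ := fun n => 1 - q ^ n with hF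
  have hF0 : ∀ n, 0 ≤ F n := fun n => by
    simp only [hF, sub_nonneg]; exact pow_le_one₀ hq0 hq1
  have hFmono : ∀ m n : ℕ, m ≤ n → F m ≤ F n := fun m n h => by
    simp only [hF, sub_le_sub_iff_left]; exact pow_le_pow_of_le_one hq0 hq1 h
  have hcdf : ∀ j n, μ {ω | T j ω ≤ n} = ENNReal.ofReal (F n) := by
    intro j n
    rw [hF, hq]
    exact geom_cdf_aux μ p hp hp1 (T j) (hmeas j) (hgeom j) n
  -- joint CDF via independence
  have hjoint : ∀ a : Fin M → ℕ, μ (⋂ j, T j ⁻¹' Set.Iic (a j))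
      = ENNReal.ofReal (∏ j, F (a j)) := by
    intro a
    have h := (iIndepFun_iff_measure_inter_preimage_eq_mul.mp hindep) Finset.univ
      (sets := fun j => Set.Iic (a j)) (fun i _ => measurableSet_Iic)
    rw [show (⋂ j, T j ⁻¹' Set.Iic (a j)) = ⋂ j ∈ Finset.univ, T j ⁻¹' Set.Iic (a j) by simp,
      h, ENNReal.ofReal_prod_of_nonneg (fun i _ => hF0 _)]
    congr 1
    ext j
    have : T j ⁻¹' Set.Iic (a j) = {ω | T j ω ≤ a j} := rfl
    rw [this, hcdf]
  set B : ℕ → Set Ω := fun i => ⋂ j : Fin M,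
    T j ⁻¹' Set.Iic (if (j:ℕ) < k-1 then i-1 else i) with hB
  set C : ℕ → Set Ω := fun i => ⋂ j : Fin M, T j ⁻¹' Set.Iic (i-1) with hC
  set D : ℕ → Set Ω := fun i => if k ≤ i then B i \ C i else ∅ with hD
  have hBmeas : ∀ i, MeasurableSet (B i) := fun i =>
    MeasurableSet.iInter fun j => (hmeas j) measurableSet_Iic
  have hCmeas : ∀ i, MeasurableSet (C i) := fun i =>
    MeasurableSet.iInter fun j => (hmeas j) measurableSet_Iic
  have hcard1 : (Finset.univ.filter fun j : Fin M => (j:ℕ) < k-1).card = k - 1 := by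
    rw [Finset.card_filter, Fin.sum_univ_eq_sum_range (fun j => if j < k-1 then 1 else 0),
      ← Finset.card_filter]
    rw [show ((Finset.range M).filter (fun j => j < k-1)) = Finset.range (k-1) by
      ext x; simp; omega]
    simp
  have hcard2 : (Finset.univ.filter fun j : Fin M => ¬ (j:ℕ) < k-1).card = M - k + 1 := by
    have := Finset.card_filter_add_card_filter_not
      (s := (Finset.univ : Finset (Fin M))) (p := fun j : Fin M => (j:ℕ) < k-1)
    rw [hcard1] at this
    simp only [Finset.card_univ, Fintype.card_fin] at this
    omega
  have hμB : ∀ i, μ (B i) = ENNReal.ofReal (F (i-1) ^ (k-1) * F i ^ (M-k+1)) := by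
    intro i
    rw [hB]
    rw [hjoint (fun j => if (j:ℕ) < k-1 then i-1 else i)]
    congr 1
    calc ∏ j : Fin M, F (if (j:ℕ) < k-1 then i-1 else i)
        = ∏ j : Fin M, (if (j:ℕ) < k-1 then F (i-1) else F i) := by
          apply Finset.prod_congr rfl; intro j _; split <;> rfl
      _ = F (i-1) ^ (k-1) * F i ^ (M-k+1) := by
          rw [Finset.prod_ite, Finset.prod_const, Finset.prod_const, hcard1, hcard2]
  have hμC : ∀ i, μ (C i) = ENNReal.ofReal (F (i-1) ^ M) := by
    intro i
    rw [hC, hjoint (fun _ => i-1), Finset.prod_const, Finset.card_univ, Fintype.card_fin]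
  have hCB : ∀ i, C i ⊆ B i := by
    intro i ω hω
    simp only [hB, hC, Set.mem_iInter, Set.mem_preimage, Set.mem_Iic] at *
    intro j
    split
    · exact hω j
    · exact le_trans (hω j) (by omega)
  -- measure of D i
  have hμD : ∀ i, k ≤ i → μ (D i)
      = ENNReal.ofReal (F (i-1) ^ (k-1) * (F i ^ (M-k+1) - F (i-1) ^ (M-k+1))) := by
    intro i hi
    rw [hD]
    simp only [if_pos hi]
    rw [measure_diff (hCB i) (hCmeas i).nullMeasurableSet (measure_ne_top μ _),
      hμB, hμC]
    rw [← ENNReal.ofReal_sub _ (pow_nonneg (hF0 _) _)]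
    congr 1
    have hMsplit : F (i-1) ^ M = F (i-1) ^ (k-1) * F (i-1) ^ (M-k+1) := by
      rw [← pow_add]; congr 1; omega
    rw [hMsplit]; ring
  -- decomposition of the event
  have hA : {ω | ((Finset.univ.filter fun j : Fin M => (j : ℕ) < k - 1).sup fun j => T j ω)
              < (Finset.univ.sup fun j => T j ω)
            ∧ k ≤ Finset.univ.sup fun j => T j ω} = ⋃ i, D i := by
    ext ω
    simp only [Set.mem_setOf_eq, Set.mem_iUnion, hD]
    constructor
    · rintro ⟨hlt, hksup⟩
      refine ⟨Finset.univ.sup fun j => T j ω, ?_⟩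
      rw [if_pos hksup]
      refine ⟨?_, ?_⟩
      · simp only [hB, Set.mem_iInter, Set.mem_preimage, Set.mem_Iic]
        intro j
        split
        case isTrue hj =>
          have h1 : T j ω ≤ (Finset.univ.filter fun j : Fin M => (j:ℕ) < k-1).sup
              fun j => T j ω :=
            Finset.le_sup (f := fun j => T j ω)
              (Finset.mem_filter.mpr ⟨Finset.mem_univ j, hj⟩)
          omega
        case isFalse hj => exact Finset.le_sup (f := fun j => T j ω) (Finset.mem_univ j)
      · intro hωC
        simp only [hC, Set.mem_iInter, Set.mem_preimage, Set.mem_Iic] at hωC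
        have h2 : (Finset.univ.sup fun j => T j ω) ≤ (Finset.univ.sup fun j => T j ω) - 1 :=
          Finset.sup_le fun j _ => hωC j
        omega
    · rintro ⟨i, hi⟩
      by_cases hki : k ≤ i
      · rw [if_pos hki] at hi
        obtain ⟨hωB, hωC⟩ := hi
        simp only [hB, Set.mem_iInter, Set.mem_preimage, Set.mem_Iic] at hωB
        simp only [hC, Set.mem_iInter, Set.mem_preimage, Set.mem_Iic] at hωC
        push_neg at hωC
        obtain ⟨j0, hj0⟩ := hωC
        have hsupge : i ≤ Finset.univ.sup fun j => T j ω := by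
          have h3 : T j0 ω ≤ Finset.univ.sup fun j => T j ω :=
            Finset.le_sup (f := fun j => T j ω) (Finset.mem_univ j0)
          omega
        have hsupfil : ((Finset.univ.filter fun j : Fin M => (j:ℕ) < k-1).sup
            fun j => T j ω) ≤ i - 1 := by
          apply Finset.sup_le
          intro j hj
          have h4 := hωB j
          rw [if_pos (by simpa using (Finset.mem_filter.mp hj).2)] at h4
          exact h4
        exact ⟨by omega, by omega⟩
      · rw [if_neg hki] at hi
        exact absurd hi (Set.notMem_empty ω)
  have key : ∀ a b : ℕ, a < b → Disjoint (D a) (D b) := by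
    intro a b h
    rw [Set.disjoint_left]
    intro ω hωa hωb
    simp only [hD] at hωa hωb
    by_cases hka : k ≤ a
    · rw [if_pos hka] at hωa
      by_cases hkb : k ≤ b
      · rw [if_pos hkb] at hωb
        obtain ⟨hBa, -⟩ := hωa
        obtain ⟨-, hCb⟩ := hωb
        apply hCb
        simp only [hB, Set.mem_iInter, Set.mem_preimage, Set.mem_Iic] at hBa
        simp only [hC, Set.mem_iInter, Set.mem_preimage, Set.mem_Iic]
        intro j
        have h5 := hBa j
        split at h5 <;> omega
      · rw [if_neg hkb] at hωb; exact hωb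
    · rw [if_neg hka] at hωa; exact hωa
  have hdisj : Pairwise (Function.onFun Disjoint D) := by
    intro a b hab
    rcases lt_or_gt_of_ne hab with h | h
    · exact key a b h
    · exact (key b a h).symm
  have hDmeas : ∀ i, MeasurableSet (D i) := by
    intro i
    rw [hD]
    dsimp only
    split
    · exact (hBmeas i).diff (hCmeas i)
    · exact MeasurableSet.empty
  rw [hA, measure_iUnion hdisj hDmeas, ENNReal.tsum_toReal_eq (fun i => measure_ne_top μ _)]
  apply tsum_congr
  intro i
  by_cases hki : k ≤ i
  · have hnn : 0 ≤ F (i-1) ^ (k-1) * (F i ^ (M-k+1) - F (i-1) ^ (M-k+1)) := by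
      apply mul_nonneg (pow_nonneg (hF0 _) _)
      rw [sub_nonneg]
      exact pow_le_pow_left₀ (hF0 _) (hFmono _ _ (by omega)) _
    rw [if_pos hki, hμD i hki, ENNReal.toReal_ofReal hnn]
  · rw [if_neg hki]
    have hDi : D i = ∅ := by rw [hD]; exact if_neg hki
    rw [hDi]
    simp
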